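/- Let φ : ℝ → ℝ be convex with left-hand derivative φ', and let H be the Lebesgue–Stieltjes measure dH(θ) = dφ'(θ). Then for all x, y ∈ ℝ, the Bregman divergence φ(y) − φ(x) − φ'(x)(y−x) equals ∫ ((y−θ)₊ − (x−θ)₊ − (y−x)·1(θ < x)) dH(θ). In particular, for x < y, φ(y) − φ(x) − φ'(x)(y−x) = ∫_{[x,y)} (y − θ) dφ'(θ). -/

import Mathlib

open MeasureTheory

/-- FTC for convex functions with left derivative, via reflection. -/
lemma ftc_left (φ φ' : ℝ → ℝ)
    (hφ : ConvexOn ℝ Set.univ φ)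
    (hderiv : ∀ x, HasDerivWithinAt φ (φ' x) (Set.Iio x) x)
    (hmono : Monotone φ') {a b : ℝ} (hab : a ≤ b) :
    ∫ t in a..b, φ' t = φ b - φ a := by
  have hcont : Continuous φ := by
    rw [← continuousOn_univ]
    exact hφ.continuousOn isOpen_univ
  have hψ : ∀ u : ℝ, HasDerivWithinAt (fun v : ℝ => -φ (-v)) (φ' (-u)) (Set.Ioi u) u := by
    intro u
    have h1 : HasDerivWithinAt (fun v : ℝ => -v) (-1) (Set.Ioi u) u :=
      (hasDerivAt_neg u).hasDerivWithinAt
    have hmaps : Set.MapsTo (fun v : ℝ => -v) (Set.Ioi u) (Set.Iio (-u)) := by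
      intro v hv; simpa using hv
    have h2 := HasDerivWithinAt.comp (h := fun v : ℝ => -v) (h₂ := φ) (x := u)
      (by simpa using hderiv (-u)) h1 hmaps
    have h3 := h2.neg
    simpa [Function.comp_def, Pi.neg_def, mul_comm] using h3
  have hint : IntervalIntegrable (fun y : ℝ => φ' (-y)) volume (-b) (-a) := by
    have : Antitone fun y : ℝ => φ' (-y) := fun s t hst => hmono (by linarith)
    exact this.intervalIntegrable
  have key := intervalIntegral.integral_eq_sub_of_hasDeriv_right_of_le
    (a := -b) (b := -a) (f := fun v : ℝ => -φ (-v)) (f' := fun y : ℝ => φ' (-y))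
    (by linarith) ((hcont.comp continuous_neg).neg).continuousOn
    (fun x _ => hψ x) hint
  have hrw : (∫ y in (-b)..(-a), φ' (-y)) = ∫ t in a..b, φ' t := by
    simpa using intervalIntegral.integral_comp_neg (a := -b) (b := -a) φ'
  rw [hrw] at key
  simp only [neg_neg] at key
  linarith [key]

/-- Layer-cake computation of the Bregman integral. -/
lemma layer_key (φ φ' : ℝ → ℝ)
    (hφ : ConvexOn ℝ Set.univ φ)
    (hderiv : ∀ x, HasDerivWithinAt φ (φ' x) (Set.Iio x) x)
    (hmono : Monotone φ')
    (H : Measure ℝ)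
    (hH : ∀ a b, a ≤ b → H (Set.Ico a b) = ENNReal.ofReal (φ' b - φ' a))
    {a b : ℝ} (hab : a < b) :
    ∫ θ in Set.Ico a b, (b - θ) ∂H = φ b - φ a - φ' a * (b - a) := by
  set μ := H.restrict (Set.Ico a b) with hμ
  have hfin : IsFiniteMeasure μ := by
    constructor
    rw [hμ, Measure.restrict_apply_univ, hH a b hab.le]
    exact ENNReal.ofReal_lt_top
  set f : ℝ → ℝ := fun θ => max (b - θ) 0 with hf
  have hstep1 : ∫ θ in Set.Ico a b, (b - θ) ∂H = ∫ θ, f θ ∂μ := by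
    refine setIntegral_congr_fun measurableSet_Ico ?_
    intro θ hθ
    simp only [hf]
    rw [max_eq_left (by linarith [hθ.2])]
  have hfm : AEStronglyMeasurable f μ :=
    ((continuous_const.sub continuous_id).max continuous_const).aestronglyMeasurable
  have hfint : Integrable f μ := by
    refine Integrable.mono' (integrable_const (b - a)) hfm ?_
    rw [hμ]
    filter_upwards [ae_restrict_mem measurableSet_Ico] with θ hθ
    rw [Real.norm_eq_abs, abs_of_nonneg (le_max_right _ _)]
    simp only [hf, max_le_iff]
    constructor <;> linarith [hθ.1, hθ.2, hab.le]
  have hnn : 0 ≤ᵐ[μ] f := Filter.Eventually.of_forall fun θ => le_max_right _ _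
  have hlc := hfint.integral_eq_integral_meas_lt hnn
  have hmeas : ∀ t ∈ Set.Ioi (0:ℝ),
      (μ {θ : ℝ | t < f θ}).toReal
        = (Set.Ioc 0 (b - a)).indicator (fun t => φ' (b - t) - φ' a) t := by
    intro t ht
    have ht0 : (0:ℝ) < t := ht
    have hset : {θ : ℝ | t < f θ} = Set.Iio (b - t) := by
      ext θ
      simp only [Set.mem_setOf_eq, hf, lt_max_iff, Set.mem_Iio]
      constructor
      · rintro (h | h) <;> linarith
      · intro h; left; linarith
    rw [hset, hμ, Measure.restrict_apply measurableSet_Iio, Set.inter_comm,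
      Set.Ico_inter_Iio]
    have hmin : min b (b - t) = b - t := min_eq_right (by linarith)
    rw [hmin]
    by_cases hcase : t ≤ b - a
    · have h1 : a ≤ b - t := by linarith
      rw [hH a (b - t) h1, ENNReal.toReal_ofReal (by linarith [hmono h1] : (0:ℝ) ≤ φ' (b - t) - φ' a)]
      rw [Set.indicator_of_mem (Set.mem_Ioc.mpr ⟨ht0, hcase⟩)]
    · have h1 : b - t < a := by linarith
      rw [Set.Ico_eq_empty (by linarith), measure_empty]
      rw [Set.indicator_of_notMem (by simp only [Set.mem_Ioc, not_and]; intro _; linarith)]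
      simp
  have hstep2 : ∫ t in Set.Ioi (0:ℝ), (μ {θ : ℝ | t < f θ}).toReal
      = ∫ t in Set.Ioc 0 (b - a), (φ' (b - t) - φ' a) := by
    rw [setIntegral_congr_fun measurableSet_Ioi hmeas,
      setIntegral_indicator measurableSet_Ioc,
      Set.inter_eq_self_of_subset_right Set.Ioc_subset_Ioi_self]
  have hstep3 : ∫ t in Set.Ioc 0 (b - a), (φ' (b - t) - φ' a)
      = φ b - φ a - φ' a * (b - a) := by
    rw [← intervalIntegral.integral_of_le (by linarith : (0:ℝ) ≤ b - a)]
    have hint1 : IntervalIntegrable (fun t : ℝ => φ' (b - t)) volume 0 (b - a) := by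
      have : Antitone fun t : ℝ => φ' (b - t) := fun s t hst => hmono (by linarith)
      exact this.intervalIntegrable
    rw [intervalIntegral.integral_sub hint1 intervalIntegrable_const,
      intervalIntegral.integral_comp_sub_left (a := 0) (b := b - a) φ' b]
    have : b - (b - a) = a := by ring
    rw [this, sub_zero, ftc_left φ φ' hφ hderiv hmono hab.le,
      intervalIntegral.integral_const]
    simp only [smul_eq_mul, sub_zero]
    ring
  rw [hstep1, hlc]
  exact hstep2.trans hstep3

/-- Bregman-type mixture representation: if `φ` is convex with left-hand derivative `φ'`
(non-decreasing, left-continuous) and `H` is the Lebesgue–Stieltjes measure `dφ'`, then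
`φ(y) − φ(x) − φ'(x)(y−x) = ∫ ((y−θ)₊ − (x−θ)₊ − (y−x)·1(θ<x)) dH(θ)`,
and for `x < y` this equals `∫_{[x,y)} (y − θ) dφ'(θ)`. -/
theorem stmt3 (φ φ' : ℝ → ℝ)
    (hφ : ConvexOn ℝ Set.univ φ)
    (hderiv : ∀ x, HasDerivWithinAt φ (φ' x) (Set.Iio x) x)
    (hmono : Monotone φ')
    (hlc : ∀ x, ContinuousWithinAt φ' (Set.Iio x) x)
    (H : Measure ℝ)
    (hH : ∀ a b, a ≤ b → H (Set.Ico a b) = ENNReal.ofReal (φ' b - φ' a)) :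
    (∀ x y : ℝ,
      φ y - φ x - φ' x * (y - x)
        = ∫ θ, (max (y - θ) 0 - max (x - θ) 0 - (y - x) * (if θ < x then (1:ℝ) else 0)) ∂H) ∧
    (∀ x y : ℝ, x < y →
      φ y - φ x - φ' x * (y - x) = ∫ θ in Set.Ico x y, (y - θ) ∂H) := by
  have part2 : ∀ x y : ℝ, x < y →
      φ y - φ x - φ' x * (y - x) = ∫ θ in Set.Ico x y, (y - θ) ∂H :=
    fun x y hxy => (layer_key φ φ' hφ hderiv hmono H hH hxy).symm
  refine ⟨?_, part2⟩
  intro x y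
  set g : ℝ → ℝ :=
    fun θ => max (y - θ) 0 - max (x - θ) 0 - (y - x) * (if θ < x then (1:ℝ) else 0) with hg
  rcases lt_trichotomy x y with hxy | hxy | hxy
  · -- x < y : integrand vanishes outside Ico x y and equals y - θ there
    have hzero : ∀ θ, θ ∉ Set.Ico x y → g θ = 0 := by
      intro θ hθ
      simp only [Set.mem_Ico, not_and, not_lt] at hθ
      by_cases h1 : θ < x
      · have h2 : θ < y := by linarith
        simp only [hg, if_pos h1]
        rw [max_eq_left (by linarith), max_eq_left (by linarith)]
        ring
      · push_neg at h1
        have h2 : y ≤ θ := hθ h1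
        simp only [hg, if_neg (not_lt.mpr h1)]
        rw [max_eq_right (by linarith), max_eq_right (by linarith)]
        ring
    rw [← setIntegral_eq_integral_of_forall_compl_eq_zero hzero]
    have heq : Set.EqOn g (fun θ => y - θ) (Set.Ico x y) := by
      intro θ hθ
      simp only [hg, if_neg (not_lt.mpr hθ.1)]
      rw [max_eq_left (by linarith [hθ.2]), max_eq_right (by linarith [hθ.1])]
      ring
    rw [setIntegral_congr_fun measurableSet_Ico heq]
    exact part2 x y hxy
  · -- x = y
    subst hxy
    have : g = fun _ => 0 := by
      funext θ; simp [hg]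
    rw [this]
    simp
  · -- y < x : integrand vanishes outside Ico y x and equals θ - y there
    have hfin : IsFiniteMeasure (H.restrict (Set.Ico y x)) := by
      constructor
      rw [Measure.restrict_apply_univ, hH y x hxy.le]
      exact ENNReal.ofReal_lt_top
    have hzero : ∀ θ, θ ∉ Set.Ico y x → g θ = 0 := by
      intro θ hθ
      simp only [Set.mem_Ico, not_and, not_lt] at hθ
      by_cases h1 : θ < y
      · have h2 : θ < x := by linarith
        simp only [hg, if_pos h2]
        rw [max_eq_left (by linarith), max_eq_left (by linarith)]
        ring
      · push_neg at h1
        have h2 : x ≤ θ := hθ h1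
        simp only [hg, if_neg (not_lt.mpr h2)]
        rw [max_eq_right (by linarith), max_eq_right (by linarith)]
        ring
    rw [← setIntegral_eq_integral_of_forall_compl_eq_zero hzero]
    have heq : Set.EqOn g (fun θ => (x - y) - (x - θ)) (Set.Ico y x) := by
      intro θ hθ
      simp only [hg, if_pos hθ.2]
      rw [max_eq_right (by linarith [hθ.1]), max_eq_left (by linarith [hθ.2])]
      ring
    rw [setIntegral_congr_fun measurableSet_Ico heq]
    have hint2 : Integrable (fun θ : ℝ => x - θ) (H.restrict (Set.Ico y x)) := by
      refine Integrable.mono' (integrable_const (x - y))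
        ((continuous_const.sub continuous_id).aestronglyMeasurable) ?_
      filter_upwards [ae_restrict_mem measurableSet_Ico] with θ hθ
      rw [Real.norm_eq_abs, abs_of_nonneg (by linarith [hθ.2] : (0:ℝ) ≤ x - θ)]
      linarith [hθ.1]
    rw [integral_sub (integrable_const _) hint2, setIntegral_const]
    have hmeasIco : H (Set.Ico y x) = ENNReal.ofReal (φ' x - φ' y) := hH y x hxy.le
    have hconst : H.real (Set.Ico y x) = φ' x - φ' y := by
      rw [measureReal_def, hmeasIco, ENNReal.toReal_ofReal (by linarith [hmono hxy.le] : (0:ℝ) ≤ φ' x - φ' y)]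
    have hlay := layer_key φ φ' hφ hderiv hmono H hH hxy
    rw [hlay, hconst]
    simp only [smul_eq_mul]
    ring
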